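/- arXiv:2305.00408 — 4 statements merged into one kernel-verified Lean document; each statement's English description precedes it below -/
import Mathlib

section
/- Let p be an odd prime, m ≥ 1, and C an m×m matrix over F_p, c ∈ F_p^m. Let r = rank(C + Cᵀ) over F_p. Then |∑_{x ∈ F_p^m} ω^{x C xᵀ + c·x}|² ≤ p^{2m - r}, where ω = e^(2πi/p). -/
open scoped BigOperators Matrix

noncomputable def omegaP (p : ℕ) : ℂ := Complex.exp (2 * Real.pi * Complex.I / p)

theorem stmt2 (p m : ℕ) [Fact p.Prime] (hodd : Odd p) (hm : 0 < m)
    (C : Matrix (Fin m) (Fin m) (ZMod p)) (c : Fin m → ZMod p) :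
    ‖∑ x : Fin m → ZMod p,
        omegaP p ^ ((x ⬝ᵥ C.mulVec x) + c ⬝ᵥ x).val‖ ^ 2
      ≤ (p : ℝ) ^ (2 * m - (C + Cᵀ).rank) := by
  classical
  have hp : p.Prime := Fact.out
  have hp0 : p ≠ 0 := hp.ne_zero
  haveI : NeZero p := ⟨hp0⟩
  set ω := omegaP p with hωdef
  have hω : IsPrimitiveRoot ω p := Complex.isPrimitiveRoot_exp p hp0
  have hωp : ω ^ p = 1 := hω.pow_eq_one
  set χ : ZMod p → ℂ := fun a => ω ^ a.val with hχ
  have hmod : ∀ n : ℕ, ω ^ (n % p) = ω ^ n := by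
    intro n
    conv_rhs => rw [← Nat.mod_add_div n p, pow_add, pow_mul, hωp, one_pow, mul_one]
  have hadd : ∀ a b : ZMod p, χ (a + b) = χ a * χ b := by
    intro a b
    simp only [hχ, ZMod.val_add, hmod, pow_add]
  have hzero : χ 0 = 1 := by simp [hχ]
  have hnorm : ∀ a, ‖χ a‖ = 1 := by
    intro a
    have h1 : ‖ω‖ = 1 := Complex.norm_eq_one_of_pow_eq_one hωp hp0
    simp [hχ, norm_pow, h1]
  have hconj : ∀ a, (starRingEnd ℂ) (χ a) = χ (-a) := by
    intro a
    have h1 : χ (-a) * χ a = 1 := by rw [← hadd]; simp [hzero]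
    have h2 : (χ a)⁻¹ = (starRingEnd ℂ) (χ a) :=
      Complex.inv_eq_conj (by exact hnorm a)
    rw [← h2, eq_comm]
    exact eq_inv_of_mul_eq_one_left h1
  have hone : ∀ a : ZMod p, χ a = 1 → a = 0 := by
    intro a h
    have hd : p ∣ a.val := (hω.pow_eq_one_iff_dvd a.val).mp h
    have := Nat.eq_zero_of_dvd_of_lt hd (ZMod.val_lt a)
    exact (ZMod.val_eq_zero a).mp this
  -- character sum over the vector space
  have hsum : ∀ v : Fin m → ZMod p,
      ∑ y : Fin m → ZMod p, χ (v ⬝ᵥ y) = if v = 0 then (p:ℂ)^m else 0 := by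
    intro v
    by_cases hv : v = 0
    · subst hv
      simp only [zero_dotProduct, hzero, Finset.sum_const, Finset.card_univ, nsmul_eq_mul,
        mul_one, if_pos]
      simp [Fintype.card_fun, ZMod.card]
    · rw [if_neg hv]
      obtain ⟨i, hi⟩ : ∃ i, v i ≠ 0 := by
        by_contra h; push_neg at h; exact hv (funext h)
      set S := ∑ y : Fin m → ZMod p, χ (v ⬝ᵥ y) with hS
      have h1 : ∑ y : Fin m → ZMod p, χ (v ⬝ᵥ (y + Pi.single i 1)) = S :=
        Fintype.sum_bijective (· + Pi.single i 1) (Equiv.addRight (Pi.single i 1)).bijective _ _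
          (fun y => rfl)
      have h2 : ∑ y : Fin m → ZMod p, χ (v ⬝ᵥ (y + Pi.single i 1)) = χ (v i) * S := by
        simp only [dotProduct_add, hadd, dotProduct_single, mul_one]
        rw [← Finset.sum_mul, ← hS, mul_comm]
      rw [h2] at h1
      have h3 : (χ (v i) - 1) * S = 0 := by
        rw [sub_mul, one_mul, h1, sub_self]
      rcases mul_eq_zero.mp h3 with h | h
      · exact absurd (hone _ (by rw [← sub_eq_zero]; exact h)) hi
      · exact h
  -- the quadratic identity
  set D := C + Cᵀ with hD
  have hq : ∀ y h : Fin m → ZMod p,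
      ((y + h) ⬝ᵥ C.mulVec (y + h) + c ⬝ᵥ (y + h)) =
        (y ⬝ᵥ C.mulVec y + c ⬝ᵥ y) + ((D.mulVec h) ⬝ᵥ y + (h ⬝ᵥ C.mulVec h + c ⬝ᵥ h)) := by
    intro y h
    have e1 : h ⬝ᵥ C.mulVec y = Cᵀ.mulVec h ⬝ᵥ y := by
      rw [Matrix.dotProduct_mulVec, ← Matrix.mulVec_transpose]
    simp only [hD, Matrix.mulVec_add, Matrix.add_mulVec, dotProduct_add,
      add_dotProduct, e1]
    rw [dotProduct_comm y (C.mulVec h)]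
    ring
  set f : (Fin m → ZMod p) → ℂ := fun x => χ (x ⬝ᵥ C.mulVec x + c ⬝ᵥ x) with hf
  set S := ∑ x : Fin m → ZMod p, f x with hSdef
  have key : S * (starRingEnd ℂ) S =
      ∑ h : Fin m → ZMod p,
        (if D.mulVec h = 0 then (p:ℂ)^m * χ (h ⬝ᵥ C.mulVec h + c ⬝ᵥ h) else 0) := by
    rw [hSdef, map_sum, Finset.sum_mul_sum]
    rw [Finset.sum_comm]
    have inner : ∀ y : Fin m → ZMod p,
        ∑ x : Fin m → ZMod p, f x * (starRingEnd ℂ) (f y)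
          = ∑ h : Fin m → ZMod p, χ (D.mulVec h ⬝ᵥ y) * χ (h ⬝ᵥ C.mulVec h + c ⬝ᵥ h) := by
      intro y
      rw [← Fintype.sum_bijective (fun h => y + h) (Equiv.addLeft y).bijective
        (fun h => f (y + h) * (starRingEnd ℂ) (f y)) _ (fun h => rfl)]
      refine Finset.sum_congr rfl (fun h _ => ?_)
      rw [hf]
      simp only
      rw [hconj, ← hadd, hq y h]
      have : (y ⬝ᵥ C.mulVec y + c ⬝ᵥ y) + ((D.mulVec h) ⬝ᵥ y + (h ⬝ᵥ C.mulVec h + c ⬝ᵥ h))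
          + -(y ⬝ᵥ C.mulVec y + c ⬝ᵥ y)
          = (D.mulVec h) ⬝ᵥ y + (h ⬝ᵥ C.mulVec h + c ⬝ᵥ h) := by ring
      rw [this, hadd]
    calc ∑ y : Fin m → ZMod p, ∑ x : Fin m → ZMod p, f x * (starRingEnd ℂ) (f y)
        = ∑ y : Fin m → ZMod p, ∑ h : Fin m → ZMod p,
            χ (D.mulVec h ⬝ᵥ y) * χ (h ⬝ᵥ C.mulVec h + c ⬝ᵥ h) := by
          exact Finset.sum_congr rfl (fun y _ => inner y)
      _ = ∑ h : Fin m → ZMod p,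
            (∑ y : Fin m → ZMod p, χ (D.mulVec h ⬝ᵥ y)) * χ (h ⬝ᵥ C.mulVec h + c ⬝ᵥ h) := by
          rw [Finset.sum_comm]
          exact Finset.sum_congr rfl (fun h _ => by rw [Finset.sum_mul])
      _ = ∑ h : Fin m → ZMod p,
            (if D.mulVec h = 0 then (p:ℂ)^m * χ (h ⬝ᵥ C.mulVec h + c ⬝ᵥ h) else 0) := by
          refine Finset.sum_congr rfl (fun h _ => ?_)
          rw [hsum (D.mulVec h), ite_mul, zero_mul]
  -- cardinality
  have hrank : D.rank ≤ m := Matrix.rank_le_width D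
  have hN : (Finset.univ.filter (fun h : Fin m → ZMod p => D.mulVec h = 0)).card
      = p ^ (m - D.rank) := by
    rw [← Fintype.card_subtype]
    have e : {h : Fin m → ZMod p // D.mulVec h = 0} ≃ LinearMap.ker D.mulVecLin :=
      Equiv.subtypeEquivRight (fun h => by simp [LinearMap.mem_ker, Matrix.mulVecLin_apply])
    rw [Fintype.card_congr e]
    have hcard : Fintype.card (LinearMap.ker D.mulVecLin)
        = (Fintype.card (ZMod p)) ^ Module.finrank (ZMod p) (LinearMap.ker D.mulVecLin) :=
      Module.card_eq_pow_finrank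
    have hrn := LinearMap.finrank_range_add_finrank_ker D.mulVecLin
    rw [Module.finrank_fin_fun] at hrn
    have hfk : Module.finrank (ZMod p) (LinearMap.ker D.mulVecLin) = m - D.rank := by
      unfold Matrix.rank
      omega
    rw [hcard, hfk, ZMod.card]
  -- put it together
  have habs2 : ‖S‖ ^ 2 = ‖S * (starRingEnd ℂ) S‖ := by
    rw [norm_mul, Complex.norm_conj, sq]
  rw [habs2, key]
  calc ‖∑ h : Fin m → ZMod p,
        (if D.mulVec h = 0 then (p:ℂ)^m * χ (h ⬝ᵥ C.mulVec h + c ⬝ᵥ h) else 0)‖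
      ≤ ∑ h : Fin m → ZMod p,
          ‖if D.mulVec h = 0 then (p:ℂ)^m * χ (h ⬝ᵥ C.mulVec h + c ⬝ᵥ h) else 0‖ := by
        exact norm_sum_le _ _
    _ = ∑ h : Fin m → ZMod p, (if D.mulVec h = 0 then (p:ℝ)^m else 0) := by
        refine Finset.sum_congr rfl (fun h _ => ?_)
        split
        · rw [norm_mul, hnorm, mul_one, norm_pow, Complex.norm_natCast]
        · simp
    _ = ((Finset.univ.filter (fun h : Fin m → ZMod p => D.mulVec h = 0)).card : ℝ) * (p:ℝ)^m := by
        rw [← Finset.sum_filter, Finset.sum_const, nsmul_eq_mul]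
    _ ≤ (p : ℝ) ^ (2 * m - D.rank) := by
        rw [hN]
        push_cast
        rw [← pow_add]
        have harith : m - D.rank + m = 2 * m - D.rank := by omega
        rw [harith]
end

section
/- Let p be an odd prime, m ≥ 2, π a permutation of {1,…,m}, a = (a_1,…,a_{m-1}) with each a_i ∈ F_p nonzero, and d = (d_1,…,d_m) ∈ F_p^m. Let A be the m×m matrix over F_p with A_{ii} = d_i, A_{π(k),π(k+1)} = a_k for 1 ≤ k ≤ m-1, and all other entries 0. Then rank(A + Aᵀ) ≥ m - 1 over F_p. -/
open scoped BigOperators Matrix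

/-- The matrix ψ(π, a, d): diagonal entries `d i`, entry `a k` at position
`(π k, π (k+1))` for `k + 1 < m`, zeros elsewhere. -/
def psi (p m : ℕ) (π : Equiv.Perm (Fin m)) (a d : Fin m → ZMod p) :
    Matrix (Fin m) (Fin m) (ZMod p) :=
  Matrix.of fun i j =>
    if i = j then d i
    else ∑ k : Fin m, ∑ l : Fin m,
      if ((l : ℕ) = (k : ℕ) + 1 ∧ π k = i ∧ π l = j) then a k else 0

lemma rank_submatrix_le_aux {F : Type*} [Field F] {r M : ℕ}
    (A : Matrix (Fin M) (Fin M) F) (f g : Fin r → Fin M) :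
    (A.submatrix f g).rank ≤ A.rank := by
  classical
  set P : Matrix (Fin r) (Fin M) F := Matrix.of fun i k => if k = f i then 1 else 0 with hPdef
  set Q : Matrix (Fin M) (Fin r) F := Matrix.of fun l j => if l = g j then 1 else 0 with hQdef
  have hP : A.submatrix f g = P * A * Q := by
    ext i j
    simp [hPdef, hQdef, Matrix.mul_apply, ite_mul, mul_ite, Finset.sum_ite_eq]
  rw [hP]
  exact (Matrix.rank_mul_le_left (P * A) Q).trans (Matrix.rank_mul_le_right P A)

lemma psi_apply_perm (p m : ℕ) (π : Equiv.Perm (Fin m)) (a d : Fin m → ZMod p)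
    (s t : Fin m) (hst : s ≠ t) :
    psi p m π a d (π s) (π t) = if (t : ℕ) = (s : ℕ) + 1 then a s else 0 := by
  classical
  have h : π s ≠ π t := fun h => hst (π.injective h)
  have hkey : ∀ k l : Fin m,
      (if ((l : ℕ) = (k : ℕ) + 1 ∧ π k = π s ∧ π l = π t) then a k else 0)
        = if k = s then (if l = t then (if (t : ℕ) = (s : ℕ) + 1 then a s else 0) else 0)
          else 0 := by
    intro k l
    by_cases hk : k = s <;> by_cases hl : l = t <;>
      simp [hk, hl, π.injective.eq_iff]
  simp only [psi, Matrix.of_apply, if_neg h, hkey]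
  simp [Finset.sum_ite_eq']

theorem stmt6 (p m : ℕ) [Fact p.Prime] (hodd : Odd p) (hm : 2 ≤ m)
    (π : Equiv.Perm (Fin m)) (a d : Fin m → ZMod p)
    (ha : ∀ k : Fin m, (k : ℕ) < m - 1 → a k ≠ 0) :
    m - 1 ≤ (psi p m π a d + (psi p m π a d)ᵀ).rank := by
  classical
  set B := psi p m π a d + (psi p m π a d)ᵀ with hB
  have hBentry : ∀ s t : Fin m, s ≠ t →
      B (π s) (π t) = (if (t : ℕ) = (s : ℕ) + 1 then a s else 0)
        + (if (s : ℕ) = (t : ℕ) + 1 then a t else 0) := by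
    intro s t hst
    simp [hB, Matrix.transpose_apply, psi_apply_perm p m π a d s t hst,
      psi_apply_perm p m π a d t s (Ne.symm hst)]
  -- row and column index maps
  have hr : ∀ i : Fin (m - 1), (i : ℕ) < m := fun i => lt_of_lt_of_le i.isLt (Nat.sub_le m 1)
  have hc : ∀ j : Fin (m - 1), (j : ℕ) + 1 < m := fun j => by
    have := j.isLt; omega
  set f : Fin (m - 1) → Fin m := fun i => π ⟨(i : ℕ), hr i⟩ with hf
  set g : Fin (m - 1) → Fin m := fun j => π ⟨(j : ℕ) + 1, hc j⟩ with hg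
  set N : Matrix (Fin (m - 1)) (Fin (m - 1)) (ZMod p) := B.submatrix f g with hN
  have hdiag : ∀ i : Fin (m - 1), N i i = a ⟨(i : ℕ), hr i⟩ := by
    intro i
    have hne : (⟨(i : ℕ), hr i⟩ : Fin m) ≠ ⟨(i : ℕ) + 1, hc i⟩ := by
      intro h; exact absurd (congrArg Fin.val h) (by simp)
    have := hBentry ⟨(i : ℕ), hr i⟩ ⟨(i : ℕ) + 1, hc i⟩ hne
    simp only [hN, Matrix.submatrix_apply, hf, hg, this]
    simp [show ¬((i : ℕ) = (i : ℕ) + 1 + 1) by omega]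
  have htri : N.BlockTriangular OrderDual.toDual := by
    intro i j hij
    have hij' : (i : ℕ) < (j : ℕ) := hij
    have hne : (⟨(i : ℕ), hr i⟩ : Fin m) ≠ ⟨(j : ℕ) + 1, hc j⟩ := by
      intro h
      have := congrArg Fin.val h
      simp at this; omega
    have := hBentry ⟨(i : ℕ), hr i⟩ ⟨(j : ℕ) + 1, hc j⟩ hne
    simp only [hN, Matrix.submatrix_apply, hf, hg, this]
    have h1 : ¬ ((j : ℕ) + 1 = (i : ℕ) + 1) := by omega
    have h2 : ¬ ((i : ℕ) = (j : ℕ) + 1 + 1) := by omega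
    simp [h1, h2, show ¬ ((j : ℕ) = (i : ℕ)) by omega]
  have hdet : N.det = ∏ i : Fin (m - 1), a ⟨(i : ℕ), hr i⟩ := by
    rw [Matrix.det_of_lowerTriangular N htri]
    exact Finset.prod_congr rfl fun i _ => hdiag i
  have hdetne : N.det ≠ 0 := by
    rw [hdet]
    refine Finset.prod_ne_zero_iff.mpr fun i _ => ?_
    exact ha ⟨(i : ℕ), hr i⟩ (by simp)
  have hunit : IsUnit N := (Matrix.isUnit_iff_isUnit_det N).mpr (isUnit_iff_ne_zero.mpr hdetne)
  have hrankN : N.rank = m - 1 := by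
    rw [Matrix.rank_of_isUnit N hunit, Fintype.card_fin]
  calc m - 1 = N.rank := hrankN.symm
    _ ≤ B.rank := rank_submatrix_le_aux B f g
end

section
/- Let p be an odd prime, m ≥ 2. Let π be a permutation of {1,…,m}, a ∈ (F_p^*)^{m-1}, and let d_1,…,d_p ∈ F_p^m satisfy: for every coordinate k and every i ≠ j, d_{i,k} ≠ d_{j,k}. For each i let A_i = ψ(π,a,d_i), and let Φ be the p^m × p·p^m complex matrix whose columns are the normalized sequences x ↦ p^{-m/2} ω^{x A_i xᵀ + c·x} for all i ∈ {1,…,p}, c ∈ F_p^m. Then the coherence μ(Φ) = max over distinct columns of |⟨s,t⟩| equals p^{-m/2}. -/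
open scoped BigOperators Matrix

/-- The normalized spreading column corresponding to the quadratic matrix `A`
and the linear shift `c`: `x ↦ p^{-m/2} ω^{x A xᵀ + c·x}`. -/
noncomputable def col (p m : ℕ) (A : Matrix (Fin m) (Fin m) (ZMod p))
    (c : Fin m → ZMod p) : (Fin m → ZMod p) → ℂ :=
  fun x => omegaP p ^ ((x ⬝ᵥ A.mulVec x) + c ⬝ᵥ x).val /
    (Real.sqrt ((p : ℝ) ^ m) : ℂ)


section aux
variable (p : ℕ) [Fact p.Prime]
lemma omegaP_prim : IsPrimitiveRoot (omegaP p) p :=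
  Complex.isPrimitiveRoot_exp p (Fact.out (p := p.Prime)).ne_zero
lemma omegaP_pow : omegaP p ^ p = 1 := (omegaP_prim p).pow_eq_one
noncomputable def chiP : AddChar (ZMod p) ℂ := AddChar.zmodChar p (omegaP_pow p)
lemma chiP_apply (z : ZMod p) : chiP p z = omegaP p ^ z.val := rfl
lemma abs_chiP (z : ZMod p) : ‖chiP p z‖ = 1 := by
  rw [chiP_apply, norm_pow, omegaP, Complex.norm_exp]
  have : (2 * Real.pi * Complex.I / p).re = 0 := by
    simp [Complex.div_re]
  rw [this, Real.exp_zero, one_pow]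

lemma conj_chiP (z : ZMod p) : (starRingEnd ℂ) (chiP p z) = chiP p (-z) := by
  have h1 : chiP p z * chiP p (-z) = 1 := by
    rw [← AddChar.map_add_eq_mul, add_neg_cancel, AddChar.map_zero_eq_one]
  have h2 : chiP p z * (starRingEnd ℂ) (chiP p z) = 1 := by
    rw [Complex.mul_conj]
    norm_cast
    rw [← Complex.sq_norm, abs_chiP, one_pow]
  have hz : chiP p z ≠ 0 := by
    intro h
    rw [h, zero_mul] at h1; exact one_ne_zero h1.symm
  rw [← h1] at h2
  exact mul_left_cancel₀ hz h2 |>.symm ▸ rfl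

lemma chiP_prim : (chiP p).IsPrimitive :=
  AddChar.zmodChar_primitive_of_primitive_root p (omegaP_prim p)

lemma sum_chiP_mul (w : ZMod p) (hw : w ≠ 0) : ∑ y : ZMod p, chiP p (w * y) = 0 := by
  have h := chiP_prim p hw
  have : ∑ y : ZMod p, (AddChar.mulShift (chiP p) w) y = 0 :=
    AddChar.sum_eq_zero_iff_ne_zero.mpr (by rw [← AddChar.one_eq_zero]; simpa using h)
  simpa [AddChar.mulShift_apply] using this

lemma sum_chiP_ite (w : ZMod p) :
    ∑ y : ZMod p, chiP p (w * y) = if w = 0 then (p : ℂ) else 0 := by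
  split_ifs with h
  · simp [h, AddChar.map_zero_eq_one, ZMod.card]
  · exact sum_chiP_mul p w h

lemma twoNeZeroP (hodd : Odd p) : (2 : ZMod p) ≠ 0 := by
  have hp : p.Prime := Fact.out
  intro h
  have : (p : ℕ) ∣ 2 := by
    have := (ZMod.natCast_eq_zero_iff 2 p).mp (by exact_mod_cast h)
    exact this
  have hp2 : p = 2 := (Nat.prime_dvd_prime_iff_eq hp Nat.prime_two).mp this
  obtain ⟨k, hk⟩ := hodd
  omega

lemma gaussP (hodd : Odd p) (b v : ZMod p) (hb : b ≠ 0) :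
    ‖∑ t : ZMod p, chiP p (b * t ^ 2 + v * t)‖ = Real.sqrt p := by
  set S := ∑ t : ZMod p, chiP p (b * t ^ 2 + v * t) with hS
  have key : S * (starRingEnd ℂ) S = (p : ℂ) := by
    rw [hS, map_sum, Finset.sum_mul_sum]
    simp_rw [conj_chiP, ← AddChar.map_add_eq_mul]
    rw [Finset.sum_comm]
    have hre : ∀ y : ZMod p, ∑ x : ZMod p, chiP p (b * x ^ 2 + v * x + -(b * y ^ 2 + v * y))
        = ∑ u : ZMod p, chiP p ((b * u ^ 2 + v * u) + (2 * b * u) * y) := by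
      intro y
      refine (Fintype.sum_equiv (Equiv.addRight y) _ _ (fun u => ?_)).symm
      simp only [Equiv.coe_addRight]
      congr 1
      ring
    simp_rw [hre]
    rw [Finset.sum_comm]
    simp_rw [AddChar.map_add_eq_mul, ← Finset.mul_sum, mul_comm (2 * b) _, mul_assoc]
    have : ∀ u : ZMod p, ∑ y : ZMod p, chiP p (u * (2 * (b * y))) =
        if u = 0 then (p : ℂ) else 0 := by
      intro u
      have : ∀ y : ZMod p, u * (2 * (b * y)) = (u * (2 * b)) * y := fun y => by ring
      simp_rw [this, sum_chiP_ite]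
      by_cases hu : u = 0
      · simp [hu]
      · rw [if_neg (by simp [mul_eq_zero, hu, hb, twoNeZeroP p hodd]), if_neg hu]
    simp_rw [this]
    rw [Finset.sum_eq_single (0 : ZMod p) (fun x _ hx => by simp [hx])
      (fun h => absurd (Finset.mem_univ _) h)]
    simp [AddChar.map_zero_eq_one]
  have habs : ‖S‖ ^ 2 = p := by
    have := congrArg (‖·‖) key
    rw [norm_mul, Complex.norm_conj, Complex.norm_natCast] at this
    rw [← this]; ring
  rw [← habs, Real.sqrt_sq (norm_nonneg S)]

lemma chiP_sum {ι : Type*} (s : Finset ι) (f : ι → ZMod p) :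
    chiP p (∑ k ∈ s, f k) = ∏ k ∈ s, chiP p (f k) := by
  classical
  induction s using Finset.induction_on with
  | empty => simp [AddChar.map_zero_eq_one]
  | insert _ _ h ih =>
      rw [Finset.sum_insert h, Finset.prod_insert h, AddChar.map_add_eq_mul, ih]

lemma psi_sub (m : ℕ) (π : Equiv.Perm (Fin m)) (a d1 d2 : Fin m → ZMod p) :
    psi p m π a d1 - psi p m π a d2 = Matrix.diagonal (fun k => d1 k - d2 k) := by
  ext i j
  by_cases h : i = j <;> simp [psi, Matrix.diagonal, h, Matrix.sub_apply]

lemma inner_eq (m : ℕ) (A A' : Matrix (Fin m) (Fin m) (ZMod p)) (b : Fin m → ZMod p)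
    (hA : A - A' = Matrix.diagonal b) (c c' : Fin m → ZMod p) :
    ∑ x : Fin m → ZMod p, col p m A c x * (starRingEnd ℂ) (col p m A' c' x)
      = (∏ k : Fin m, ∑ t : ZMod p, chiP p (b k * t ^ 2 + (c k - c' k) * t)) / (p : ℂ) ^ m := by
  have hp0 : (0 : ℝ) < (p : ℝ) ^ m := by
    have := (Fact.out (p := p.Prime)).pos
    positivity
  have hs : ((Real.sqrt ((p : ℝ) ^ m) : ℝ) : ℂ) * ((Real.sqrt ((p : ℝ) ^ m) : ℝ) : ℂ)
      = (((p : ℝ) ^ m : ℝ) : ℂ) := by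
    rw [← Complex.ofReal_mul, Real.mul_self_sqrt hp0.le]
  have hterm : ∀ x : Fin m → ZMod p,
      col p m A c x * (starRingEnd ℂ) (col p m A' c' x)
        = chiP p (∑ k : Fin m, (b k * x k ^ 2 + (c k - c' k) * x k)) / (p : ℂ) ^ m := by
    intro x
    have h1 : col p m A c x = chiP p (x ⬝ᵥ A.mulVec x + c ⬝ᵥ x) / (Real.sqrt ((p : ℝ) ^ m) : ℂ) := rfl
    have h2 : col p m A' c' x = chiP p (x ⬝ᵥ A'.mulVec x + c' ⬝ᵥ x) / (Real.sqrt ((p : ℝ) ^ m) : ℂ) := rfl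
    rw [h1, h2, map_div₀, conj_chiP, Complex.conj_ofReal, div_mul_div_comm, hs,
      ← AddChar.map_add_eq_mul]
    have harg : x ⬝ᵥ A.mulVec x + c ⬝ᵥ x + -(x ⬝ᵥ A'.mulVec x + c' ⬝ᵥ x)
        = ∑ k : Fin m, (b k * x k ^ 2 + (c k - c' k) * x k) := by
      have hd : x ⬝ᵥ A.mulVec x - x ⬝ᵥ A'.mulVec x = x ⬝ᵥ (Matrix.diagonal b).mulVec x := by
        rw [← hA, Matrix.sub_mulVec, dotProduct_sub]
      have hdiag : x ⬝ᵥ (Matrix.diagonal b).mulVec x = ∑ k : Fin m, b k * x k ^ 2 := by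
        simp only [dotProduct, Matrix.mulVec_diagonal]
        exact Finset.sum_congr rfl fun k _ => by ring
      have hc : c ⬝ᵥ x - c' ⬝ᵥ x = ∑ k : Fin m, (c k - c' k) * x k := by
        simp only [dotProduct, ← Finset.sum_sub_distrib]
        exact Finset.sum_congr rfl fun k _ => by ring
      rw [Finset.sum_add_distrib, ← hdiag, ← hd, ← hc]
      ring
    rw [harg]
    norm_cast
  simp_rw [hterm, chiP_sum]
  rw [← Finset.sum_div]
  congr 1
  exact (Fintype.prod_sum fun k t => chiP p (b k * t ^ 2 + (c k - c' k) * t)).symm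

lemma sqrt_pow_eq (m : ℕ) : Real.sqrt ((p : ℝ) ^ m) = Real.sqrt (p : ℝ) ^ m := by
  have hp : (0:ℝ) ≤ (p:ℝ) := by positivity
  rw [show ((p : ℝ) ^ m) = (Real.sqrt (p:ℝ) ^ m) ^ 2 by
    rw [← pow_mul, mul_comm, pow_mul, Real.sq_sqrt hp]]
  exact Real.sqrt_sq (by positivity)
end aux

theorem stmt9 (p m : ℕ) [Fact p.Prime] (hodd : Odd p) (hm : 2 ≤ m)
    (π : Equiv.Perm (Fin m)) (a : Fin m → ZMod p)
    (ha : ∀ k : Fin m, (k : ℕ) < m - 1 → a k ≠ 0)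
    (d : Fin p → Fin m → ZMod p)
    (hd : ∀ (k : Fin m) (i j : Fin p), i ≠ j → d i k ≠ d j k) :
    IsGreatest
      {r : ℝ | ∃ (i j : Fin p) (c c' : Fin m → ZMod p), (i, c) ≠ (j, c') ∧
        r = ‖(∑ x : Fin m → ZMod p,
          col p m (psi p m π a (d i)) c x *
            (starRingEnd ℂ) (col p m (psi p m π a (d j)) c' x))‖}
      ((Real.sqrt ((p : ℝ) ^ m))⁻¹) := by
  
  classical
  have hp : p.Prime := Fact.out
  have hppos : (0:ℝ) < (p:ℝ) := by exact_mod_cast hp.pos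
  set sqm : ℝ := Real.sqrt ((p : ℝ) ^ m) with hsqm
  have hsqmpos : 0 < sqm := Real.sqrt_pos.mpr (by positivity)
  -- value for i ≠ j
  have hval : ∀ (i j : Fin p) (c c' : Fin m → ZMod p), i ≠ j →
      ‖(∑ x : Fin m → ZMod p,
        col p m (psi p m π a (d i)) c x *
          (starRingEnd ℂ) (col p m (psi p m π a (d j)) c' x))‖ = sqm⁻¹ := by
    intro i j c c' hij
    rw [inner_eq p m _ _ (fun k => d i k - d j k) (psi_sub p m π a (d i) (d j)) c c']
    rw [norm_div, norm_prod, norm_pow, Complex.norm_natCast]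
    have hg : ∀ k : Fin m, ‖(∑ t : ZMod p,
        chiP p ((d i k - d j k) * t ^ 2 + (c k - c' k) * t))‖ = Real.sqrt p :=
      fun k => gaussP p hodd _ _ (sub_ne_zero.mpr (hd k i j hij))
    simp_rw [hg]
    rw [Finset.prod_const, Finset.card_univ, Fintype.card_fin]
    rw [hsqm, sqrt_pow_eq]
    have h2 : (p : ℝ) ^ m = (Real.sqrt (p:ℝ) ^ m) ^ 2 := by
      rw [← pow_mul, mul_comm, pow_mul, Real.sq_sqrt hppos.le]
    rw [h2, pow_two]
    have hpos : (0:ℝ) < Real.sqrt (p:ℝ) ^ m := by positivity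
    field_simp
  -- value for i = j, c ≠ c'
  have hval0 : ∀ (i : Fin p) (c c' : Fin m → ZMod p), c ≠ c' →
      ‖(∑ x : Fin m → ZMod p,
        col p m (psi p m π a (d i)) c x *
          (starRingEnd ℂ) (col p m (psi p m π a (d i)) c' x))‖ = 0 := by
    intro i c c' hcc
    rw [inner_eq p m _ _ (fun k => d i k - d i k) (psi_sub p m π a (d i) (d i)) c c']
    obtain ⟨k, hk⟩ : ∃ k, c k ≠ c' k := by
      by_contra h
      push_neg at h
      exact hcc (funext h)
    have hzero : ∑ t : ZMod p, chiP p ((d i k - d i k) * t ^ 2 + (c k - c' k) * t) = 0 := by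
      have : ∀ t : ZMod p, (d i k - d i k) * t ^ 2 + (c k - c' k) * t
          = (c k - c' k) * t := fun t => by ring
      simp_rw [this]
      exact sum_chiP_mul p _ (sub_ne_zero.mpr hk)
    rw [Finset.prod_eq_zero (Finset.mem_univ k) hzero, zero_div, norm_zero]
  constructor
  · refine ⟨⟨0, hp.pos⟩, ⟨1, hp.one_lt⟩, 0, 0, ?_, ?_⟩
    · intro h
      have := congrArg Prod.fst h
      simp [Fin.ext_iff] at this
    · exact (hval _ _ 0 0 (by simp [Fin.ext_iff])).symm
  · rintro r ⟨i, j, c, c', hne, rfl⟩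
    by_cases hij : i = j
    · subst hij
      have hcc : c ≠ c' := fun h => hne (by rw [h])
      rw [hval0 i c c' hcc]
      positivity
    · exact (hval i j c c' hij).le
end

section
/- Let p be an odd prime, m ≥ 2, π a permutation of {1,…,m}, a ∈ (F_p^*)^{m-1}, d ∈ F_p^m, and A = ψ(π,a,d). Define d'_i = d_{π(i)} and B = ψ(id, a, d'). Then for all x ∈ F_p^m, x(A + Aᵀ)xᵀ = (xP)(B + Bᵀ)(xP)ᵀ where P is the permutation matrix of π, and consequently rank(A + Aᵀ) = rank(B + Bᵀ) over F_p. -/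
open scoped BigOperators Matrix

lemma psi_key (p m : ℕ) (π : Equiv.Perm (Fin m)) (a d : Fin m → ZMod p) :
    psi p m π a d =
      (psi p m (Equiv.refl (Fin m)) a (fun i => d (π i))).submatrix π.symm π.symm := by
  ext i j
  simp only [psi, Matrix.submatrix_apply, Matrix.of_apply, Equiv.refl_apply]
  by_cases h : i = j
  · subst h
    simp
  · have h' : π.symm i ≠ π.symm j := fun e => h (by simpa using congrArg π e)
    rw [if_neg h, if_neg h']
    refine Finset.sum_congr rfl fun k _ => Finset.sum_congr rfl fun l _ => ?_
    simp [Equiv.apply_eq_iff_eq_symm_apply]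
    exact if_congr Iff.rfl rfl rfl

theorem stmt14 (p m : ℕ) [Fact p.Prime] (hodd : Odd p) (hm : 2 ≤ m)
    (π : Equiv.Perm (Fin m)) (a d : Fin m → ZMod p)
    (ha : ∀ k : Fin m, (k : ℕ) < m - 1 → a k ≠ 0) :
    (∀ x : Fin m → ZMod p,
      x ⬝ᵥ (psi p m π a d + (psi p m π a d)ᵀ).mulVec x =
        (fun i => x (π i)) ⬝ᵥ
          (psi p m (Equiv.refl (Fin m)) a (fun i => d (π i)) +
            (psi p m (Equiv.refl (Fin m)) a (fun i => d (π i)))ᵀ).mulVec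
          (fun i => x (π i))) ∧
    (psi p m π a d + (psi p m π a d)ᵀ).rank =
      (psi p m (Equiv.refl (Fin m)) a (fun i => d (π i)) +
        (psi p m (Equiv.refl (Fin m)) a (fun i => d (π i)))ᵀ).rank := by
  set B := psi p m (Equiv.refl (Fin m)) a (fun i => d (π i)) with hB
  have key : psi p m π a d + (psi p m π a d)ᵀ =
      (B + Bᵀ).submatrix π.symm π.symm := by
    rw [psi_key p m π a d]; rfl
  constructor
  · intro x
    rw [key, Matrix.submatrix_mulVec_equiv]
    simp only [dotProduct, Function.comp_def, Equiv.symm_symm]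
    exact Fintype.sum_equiv π.symm _ _ (fun i => by simp only [Equiv.apply_symm_apply])
  · rw [key, Matrix.rank_submatrix]
end
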